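/- For any element ν of a finite-dimensional commutative Frobenius algebra (A, f), the trace of the multiplication operator M_ν : a ↦ a·ν equals f(e_{A,f} · ν), where e_{A,f} is the Euler class. -/

import Mathlib

/-- The trace of the multiplication operator `M_ν` equals `f (e_{A,f} · ν)`. -/
theorem trace_mul_eq_f_euler_mul (K A : Type) [Field K]
    [CommRing A] [Algebra K A] [FiniteDimensional K A]
    (f : A →ₗ[K] K)
    (hf : ∀ a : A, (∀ b : A, f (a * b) = 0) → a = 0)
    (ι : Type) [Fintype ι] [DecidableEq ι] (e : Module.Basis ι K A) (d : ι → A)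
    (hd : ∀ i j, f (e i * d j) = if i = j then (1 : K) else 0)
    (ν : A) :
    LinearMap.trace K A (LinearMap.mulLeft K ν) = f ((∑ i, e i * d i) * ν) := by
  have key : ∀ (a : A) (j : ι), f (a * d j) = e.repr a j := by
    intro a j
    conv_lhs => rw [← e.sum_repr a]
    rw [Finset.sum_mul, map_sum]
    simp only [smul_mul_assoc, map_smul, hd, smul_eq_mul, mul_ite, mul_one, mul_zero]
    simp
  rw [LinearMap.trace_eq_matrix_trace K e, Matrix.trace]
  simp only [Matrix.diag, LinearMap.toMatrix_apply, LinearMap.mulLeft_apply]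
  rw [Finset.sum_mul, map_sum]
  congr 1
  ext i
  rw [← key (ν * e i) i]
  ring_nf
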